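/- Let μ, ν ∈ k and let A := k[x₁,x₂]/(x₁x₂ − μ·x₁³, x₂³ − ν·x₁³, x₁⁴). Then the socle Soc(A) = {a ∈ A : a·𝔪 = 0} (where 𝔪 is the maximal ideal of A generated by the classes of x₁ and x₂) is a one-dimensional k-vector space if and only if ν ≠ 0. -/

import Mathlib

set_option synthInstance.maxHeartbeats 1000000
set_option maxHeartbeats 1000000

open MvPolynomial

/-- The socle of a commutative ring `A` relative to an ideal `m`:
the ideal of all elements annihilating `m`. -/
def socleOf {A : Type*} [CommRing A] (m : Ideal A) : Ideal A where
  carrier := {a : A | ∀ b ∈ m, a * b = 0}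
  add_mem' := by intro a b ha hb c hc; rw [add_mul, ha c hc, hb c hc, add_zero]
  zero_mem' := by intro c hc; rw [zero_mul]
  smul_mem' := by intro r a ha c hc; rw [smul_eq_mul, mul_assoc, ha c hc, mul_zero]

/-- The ideal `(x₁x₂ - μ·x₁³, x₂³ - ν·x₁³, x₁⁴)` (with `x₁ = X 0`, `x₂ = X 1`). -/
noncomputable def muNuIdeal (k : Type*) [Field k] (μ ν : k) : Ideal (MvPolynomial (Fin 2) k) :=
  Ideal.span {X 0 * X 1 - C μ * X 0 ^ 3, X 1 ^ 3 - C ν * X 0 ^ 3, X 0 ^ 4}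

namespace St14

/-- canonical exponent vector -/
noncomputable def ee (a b : ℕ) : Fin 2 →₀ ℕ := Finsupp.single 0 a + Finsupp.single 1 b

lemma ee_apply0 (a b : ℕ) : ee a b 0 = a := by simp [ee]
lemma ee_apply1 (a b : ℕ) : ee a b 1 = b := by simp [ee]

lemma ee_eq {a b a' b' : ℕ} : ee a b = ee a' b' ↔ a = a' ∧ b = b' := by
  constructor
  · intro h
    constructor
    · have := DFunLike.congr_fun h 0; simpa [ee_apply0] using this
    · have := DFunLike.congr_fun h 1; simpa [ee_apply1] using this
  · rintro ⟨rfl, rfl⟩; rfl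

lemma ee_le {a b a' b' : ℕ} : ee a b ≤ ee a' b' ↔ a ≤ a' ∧ b ≤ b' := by
  rw [Finsupp.le_def]
  constructor
  · intro h
    exact ⟨by simpa [ee_apply0] using h 0, by simpa [ee_apply1] using h 1⟩
  · rintro ⟨h0, h1⟩ i
    fin_cases i
    · simpa [ee_apply0] using h0
    · simpa [ee_apply1] using h1

lemma ee_sub (a b a' b' : ℕ) : ee a' b' - ee a b = ee (a' - a) (b' - b) := by
  ext i
  fin_cases i <;> simp [Finsupp.tsub_apply, ee_apply0, ee_apply1]

variable {k : Type*} [Field k]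

lemma XiXj_eq (i j : ℕ) :
    (X 0 ^ i * X 1 ^ j : MvPolynomial (Fin 2) k) = monomial (ee i j) 1 := by
  rw [X_pow_eq_monomial, X_pow_eq_monomial, monomial_mul, one_mul]
  rfl

lemma coeff_mul_mono (q : MvPolynomial (Fin 2) k) (i j a b : ℕ) :
    coeff (ee a b) (q * (X 0 ^ i * X 1 ^ j)) =
      if i ≤ a ∧ j ≤ b then coeff (ee (a - i) (b - j)) q else 0 := by
  rw [XiXj_eq, coeff_mul_monomial']
  by_cases h : i ≤ a ∧ j ≤ b
  · rw [if_pos (ee_le.mpr h), if_pos h, ee_sub, mul_one]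
  · rw [if_neg (fun hh => h (ee_le.mp hh)), if_neg h]

lemma coeff_C_mul_mono (c : k) (i j a b : ℕ) :
    coeff (ee a b) (C c * (X 0 ^ i * X 1 ^ j)) = if i = a ∧ j = b then c else 0 := by
  rw [coeff_C_mul, XiXj_eq, coeff_monomial]
  by_cases h : i = a ∧ j = b
  · rw [if_pos (ee_eq.mpr h), if_pos h, mul_one]
  · rw [if_neg (fun hh => h (ee_eq.mp hh)), if_neg h, mul_zero]

variable (μ ν : k)

lemma m_g1 : X 0 * X 1 - C μ * X 0 ^ 3 ∈ muNuIdeal k μ ν :=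
  Ideal.subset_span (Set.mem_insert _ _)

lemma m_g2 : X 1 ^ 3 - C ν * X 0 ^ 3 ∈ muNuIdeal k μ ν :=
  Ideal.subset_span (Set.mem_insert_of_mem _ (Set.mem_insert _ _))

lemma m_g3 : (X 0 : MvPolynomial (Fin 2) k) ^ 4 ∈ muNuIdeal k μ ν :=
  Ideal.subset_span (Set.mem_insert_of_mem _ (Set.mem_insert_of_mem _ rfl))

lemma m_x2y : (X 0 : MvPolynomial (Fin 2) k) ^ 2 * X 1 ∈ muNuIdeal k μ ν := by
  have h : (X 0 : MvPolynomial (Fin 2) k) ^ 2 * X 1 =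
      X 0 * (X 0 * X 1 - C μ * X 0 ^ 3) + C μ * X 0 ^ 4 := by ring
  rw [h]
  exact add_mem (Ideal.mul_mem_left _ _ (m_g1 μ ν)) (Ideal.mul_mem_left _ _ (m_g3 μ ν))

lemma m_x3y : (X 0 : MvPolynomial (Fin 2) k) ^ 3 * X 1 ∈ muNuIdeal k μ ν := by
  have h : (X 0 : MvPolynomial (Fin 2) k) ^ 3 * X 1 =
      X 0 ^ 2 * (X 0 * X 1 - C μ * X 0 ^ 3) + (C μ * X 0) * X 0 ^ 4 := by ring
  rw [h]
  exact add_mem (Ideal.mul_mem_left _ _ (m_g1 μ ν)) (Ideal.mul_mem_left _ _ (m_g3 μ ν))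

lemma m_xy2 : (X 0 : MvPolynomial (Fin 2) k) * X 1 ^ 2 ∈ muNuIdeal k μ ν := by
  have h : (X 0 : MvPolynomial (Fin 2) k) * X 1 ^ 2 =
      (X 1 + C μ * X 0 ^ 2) * (X 0 * X 1 - C μ * X 0 ^ 3) + (C μ ^ 2 * X 0) * X 0 ^ 4 := by
    ring
  rw [h]
  exact add_mem (Ideal.mul_mem_left _ _ (m_g1 μ ν)) (Ideal.mul_mem_left _ _ (m_g3 μ ν))

/-- The key linear functionals vanishing on the ideal. -/
lemma coeffs_of_mem {p : MvPolynomial (Fin 2) k} (hp : p ∈ muNuIdeal k μ ν) :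
    coeff (ee 0 0) p = 0 ∧ coeff (ee 1 0) p = 0 ∧ coeff (ee 0 1) p = 0 ∧
    coeff (ee 2 0) p = 0 ∧ coeff (ee 0 2) p = 0 ∧
    coeff (ee 3 0) p + μ * coeff (ee 1 1) p + ν * coeff (ee 0 3) p = 0 := by
  suffices h : ∀ q : MvPolynomial (Fin 2) k,
      coeff (ee 0 0) (q * p) = 0 ∧ coeff (ee 1 0) (q * p) = 0 ∧ coeff (ee 0 1) (q * p) = 0 ∧
      coeff (ee 2 0) (q * p) = 0 ∧ coeff (ee 0 2) (q * p) = 0 ∧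
      coeff (ee 3 0) (q * p) + μ * coeff (ee 1 1) (q * p) + ν * coeff (ee 0 3) (q * p) = 0 by
    simpa using h 1
  refine Submodule.span_induction ?_ ?_ ?_ ?_ hp
  · intro x hx
    rcases hx with rfl | rfl | rfl
    · -- g1
      intro q
      have hexp : q * (X 0 * X 1 - C μ * X 0 ^ 3) =
          q * (X 0 ^ 1 * X 1 ^ 1) - C μ * (q * (X 0 ^ 3 * X 1 ^ 0)) := by ring
      rw [hexp]
      simp only [coeff_sub, coeff_C_mul, coeff_mul_mono]
      norm_num
    · -- g2
      intro q
      have hexp : q * (X 1 ^ 3 - C ν * X 0 ^ 3) =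
          q * (X 0 ^ 0 * X 1 ^ 3) - C ν * (q * (X 0 ^ 3 * X 1 ^ 0)) := by ring
      rw [hexp]
      simp only [coeff_sub, coeff_C_mul, coeff_mul_mono]
      norm_num
    · -- g3
      intro q
      have hexp : q * (X 0 ^ 4) = q * (X 0 ^ 4 * X 1 ^ 0) := by ring
      rw [hexp]
      simp only [coeff_mul_mono]
      norm_num
  · intro q; simp
  · intro x y _ _ hx hy q
    obtain ⟨a1, a2, a3, a4, a5, a6⟩ := hx q
    obtain ⟨b1, b2, b3, b4, b5, b6⟩ := hy q
    rw [mul_add]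
    refine ⟨?_, ?_, ?_, ?_, ?_, ?_⟩ <;> simp only [coeff_add]
    · linear_combination a1 + b1
    · linear_combination a2 + b2
    · linear_combination a3 + b3
    · linear_combination a4 + b4
    · linear_combination a5 + b5
    · linear_combination a6 + b6
  · intro a x _ hx q
    rw [smul_eq_mul, show q * (a * x) = (q * a) * x by ring]
    exact hx (q * a)

/-- Normal form polynomial. -/
noncomputable def Pc (c0 c1 c2 c3 c4 c5 : k) : MvPolynomial (Fin 2) k :=
  C c0 + C c1 * X 0 + C c2 * X 1 + C c3 * X 0 ^ 2 + C c4 * X 1 ^ 2 + C c5 * X 0 ^ 3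

lemma exists_rep (p : MvPolynomial (Fin 2) k) :
    ∃ c0 c1 c2 c3 c4 c5 : k,
      Ideal.Quotient.mk (muNuIdeal k μ ν) p
        = Ideal.Quotient.mk (muNuIdeal k μ ν) (Pc c0 c1 c2 c3 c4 c5) := by
  induction p using MvPolynomial.induction_on with
  | C a =>
      refine ⟨a, 0, 0, 0, 0, 0, ?_⟩
      congr 1
      simp [Pc]
  | add p q hp hq =>
      obtain ⟨c0, c1, c2, c3, c4, c5, hc⟩ := hp
      obtain ⟨d0, d1, d2, d3, d4, d5, hd⟩ := hq
      refine ⟨c0 + d0, c1 + d1, c2 + d2, c3 + d3, c4 + d4, c5 + d5, ?_⟩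
      have hPc : Pc (c0 + d0) (c1 + d1) (c2 + d2) (c3 + d3) (c4 + d4) (c5 + d5)
          = Pc c0 c1 c2 c3 c4 c5 + Pc d0 d1 d2 d3 d4 d5 := by
        simp only [Pc, map_add]
        ring
      rw [map_add, hc, hd, hPc, map_add]
  | mul_X p i hp =>
      obtain ⟨c0, c1, c2, c3, c4, c5, hc⟩ := hp
      fin_cases i
      · refine ⟨0, c0, 0, c1, 0, c3 + μ * c2, ?_⟩
        have hdiff : Pc c0 c1 c2 c3 c4 c5 * X 0 - Pc 0 c0 0 c1 0 (c3 + μ * c2) =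
            C c2 * (X 0 * X 1 - C μ * X 0 ^ 3) + C c4 * (X 0 * X 1 ^ 2) +
              C c5 * X 0 ^ 4 := by
          simp only [Pc, map_add, map_mul, map_zero]
          ring
        have hmem : Pc c0 c1 c2 c3 c4 c5 * X 0 - Pc 0 c0 0 c1 0 (c3 + μ * c2)
            ∈ muNuIdeal k μ ν := by
          rw [hdiff]
          exact add_mem (add_mem (Ideal.mul_mem_left _ _ (m_g1 μ ν))
            (Ideal.mul_mem_left _ _ (m_xy2 μ ν))) (Ideal.mul_mem_left _ _ (m_g3 μ ν))
        rw [map_mul, hc, ← map_mul, ← sub_eq_zero, ← map_sub, Ideal.Quotient.eq_zero_iff_mem]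
        exact hmem
      · refine ⟨0, 0, c0, 0, c2, μ * c1 + ν * c4, ?_⟩
        have hdiff : Pc c0 c1 c2 c3 c4 c5 * X 1 - Pc 0 0 c0 0 c2 (μ * c1 + ν * c4) =
            C c1 * (X 0 * X 1 - C μ * X 0 ^ 3) + C c4 * (X 1 ^ 3 - C ν * X 0 ^ 3) +
              C c3 * (X 0 ^ 2 * X 1) + C c5 * (X 0 ^ 3 * X 1) := by
          simp only [Pc, map_add, map_mul, map_zero]
          ring
        have hmem : Pc c0 c1 c2 c3 c4 c5 * X 1 - Pc 0 0 c0 0 c2 (μ * c1 + ν * c4)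
            ∈ muNuIdeal k μ ν := by
          rw [hdiff]
          exact add_mem (add_mem (add_mem (Ideal.mul_mem_left _ _ (m_g1 μ ν))
            (Ideal.mul_mem_left _ _ (m_g2 μ ν))) (Ideal.mul_mem_left _ _ (m_x2y μ ν)))
            (Ideal.mul_mem_left _ _ (m_x3y μ ν))
        rw [map_mul, hc, ← map_mul, ← sub_eq_zero, ← map_sub, Ideal.Quotient.eq_zero_iff_mem]
        exact hmem


lemma coeffs_PcX0 (c0 c1 c2 c3 c4 c5 : k) :
    coeff (ee 1 0) (Pc c0 c1 c2 c3 c4 c5 * X 0) = c0 ∧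
    coeff (ee 2 0) (Pc c0 c1 c2 c3 c4 c5 * X 0) = c1 ∧
    coeff (ee 1 1) (Pc c0 c1 c2 c3 c4 c5 * X 0) = c2 ∧
    coeff (ee 3 0) (Pc c0 c1 c2 c3 c4 c5 * X 0) = c3 ∧
    coeff (ee 0 3) (Pc c0 c1 c2 c3 c4 c5 * X 0) = 0 := by
  have h : Pc c0 c1 c2 c3 c4 c5 * X 0 =
      C c0 * (X 0 ^ 1 * X 1 ^ 0) + C c1 * (X 0 ^ 2 * X 1 ^ 0) + C c2 * (X 0 ^ 1 * X 1 ^ 1) +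
        C c3 * (X 0 ^ 3 * X 1 ^ 0) + C c4 * (X 0 ^ 1 * X 1 ^ 2) + C c5 * (X 0 ^ 4 * X 1 ^ 0) := by
    simp only [Pc]; ring
  rw [h]
  simp only [coeff_add, coeff_C_mul_mono]
  norm_num

lemma coeffs_PcX1 (c0 c1 c2 c3 c4 c5 : k) :
    coeff (ee 0 1) (Pc c0 c1 c2 c3 c4 c5 * X 1) = c0 ∧
    coeff (ee 0 2) (Pc c0 c1 c2 c3 c4 c5 * X 1) = c2 ∧
    coeff (ee 3 0) (Pc c0 c1 c2 c3 c4 c5 * X 1) = 0 ∧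
    coeff (ee 1 1) (Pc c0 c1 c2 c3 c4 c5 * X 1) = c1 ∧
    coeff (ee 0 3) (Pc c0 c1 c2 c3 c4 c5 * X 1) = c4 := by
  have h : Pc c0 c1 c2 c3 c4 c5 * X 1 =
      C c0 * (X 0 ^ 0 * X 1 ^ 1) + C c1 * (X 0 ^ 1 * X 1 ^ 1) + C c2 * (X 0 ^ 0 * X 1 ^ 2) +
        C c3 * (X 0 ^ 2 * X 1 ^ 1) + C c4 * (X 0 ^ 0 * X 1 ^ 3) + C c5 * (X 0 ^ 3 * X 1 ^ 1) := by
    simp only [Pc]; ring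
  rw [h]
  simp only [coeff_add, coeff_C_mul_mono]
  norm_num

lemma smul_mk (a : k) (p : MvPolynomial (Fin 2) k) :
    a • Ideal.Quotient.mk (muNuIdeal k μ ν) p
      = Ideal.Quotient.mk (muNuIdeal k μ ν) (C a * p) := by
  rw [map_mul,
    show Ideal.Quotient.mk (muNuIdeal k μ ν) (C a)
      = algebraMap k (MvPolynomial (Fin 2) k ⧸ muNuIdeal k μ ν) a from rfl,
    ← Algebra.smul_def]

lemma x3_ne_zero : Ideal.Quotient.mk (muNuIdeal k μ ν) (X 0 ^ 3) ≠ 0 := by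
  intro h
  have hmem : (X 0 ^ 3 : MvPolynomial (Fin 2) k) ∈ muNuIdeal k μ ν :=
    Ideal.Quotient.eq_zero_iff_mem.mp h
  have hmem' : (C (1 : k) * (X 0 ^ 3 * X 1 ^ 0) : MvPolynomial (Fin 2) k) ∈ muNuIdeal k μ ν := by
    rw [show (C (1 : k) * (X 0 ^ 3 * X 1 ^ 0) : MvPolynomial (Fin 2) k) = X 0 ^ 3 by simp]
    exact hmem
  have h6 := (coeffs_of_mem μ ν hmem').2.2.2.2.2
  simp only [coeff_C_mul_mono] at h6
  norm_num at h6

lemma x3_mem_socle :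
    Ideal.Quotient.mk (muNuIdeal k μ ν) (X 0 ^ 3) ∈
      socleOf (Ideal.span
        {Ideal.Quotient.mk (muNuIdeal k μ ν) (X 0),
         Ideal.Quotient.mk (muNuIdeal k μ ν) (X 1)}) := by
  intro b hb
  obtain ⟨u, w, rfl⟩ := Ideal.mem_span_pair.mp hb
  have e1 : Ideal.Quotient.mk (muNuIdeal k μ ν) (X 0 ^ 3) *
      Ideal.Quotient.mk (muNuIdeal k μ ν) (X 0) = 0 := by
    rw [← map_mul, ← pow_succ]
    exact Ideal.Quotient.eq_zero_iff_mem.mpr (m_g3 μ ν)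
  have e2 : Ideal.Quotient.mk (muNuIdeal k μ ν) (X 0 ^ 3) *
      Ideal.Quotient.mk (muNuIdeal k μ ν) (X 1) = 0 := by
    rw [← map_mul]
    exact Ideal.Quotient.eq_zero_iff_mem.mpr (m_x3y μ ν)
  calc Ideal.Quotient.mk (muNuIdeal k μ ν) (X 0 ^ 3) *
        (u * Ideal.Quotient.mk (muNuIdeal k μ ν) (X 0) +
          w * Ideal.Quotient.mk (muNuIdeal k μ ν) (X 1))
      = u * (Ideal.Quotient.mk (muNuIdeal k μ ν) (X 0 ^ 3) *
              Ideal.Quotient.mk (muNuIdeal k μ ν) (X 0)) +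
        w * (Ideal.Quotient.mk (muNuIdeal k μ ν) (X 0 ^ 3) *
              Ideal.Quotient.mk (muNuIdeal k μ ν) (X 1)) := by ring
    _ = 0 := by rw [e1, e2]; ring

end St14

open St14 in
/-- Let `μ, ν ∈ k` and `A := k[x₁,x₂]/(x₁x₂ - μ·x₁³, x₂³ - ν·x₁³, x₁⁴)`,
a local Artinian `k`-algebra whose maximal ideal `𝔪` is generated by the classes of `x₁`
and `x₂`.  Then the socle `Soc(A) = {a ∈ A : a·𝔪 = 0}` is a one-dimensional `k`-vector
space if and only if `ν ≠ 0`. -/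
theorem socle_one_dimensional_iff_nu_ne_zero
    (k : Type*) [Field k] [IsAlgClosed k]
    (hchar2 : (2 : k) ≠ 0) (hchar3 : (3 : k) ≠ 0) (μ ν : k) :
    Module.finrank k
        ((socleOf (Ideal.span
          {Ideal.Quotient.mk (muNuIdeal k μ ν) (X 0),
           Ideal.Quotient.mk (muNuIdeal k μ ν) (X 1)})).restrictScalars k) = 1 ↔
      ν ≠ 0 := by
  set π := Ideal.Quotient.mk (muNuIdeal k μ ν) with hπ
  set Soc := socleOf (Ideal.span {π (X 0), π (X 1)}) with hSoc
  constructor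
  · -- finrank = 1 → ν ≠ 0
    intro h1 hν
    subst hν
    -- finite dimensionality of the quotient
    have hFD : FiniteDimensional k (MvPolynomial (Fin 2) k ⧸ muNuIdeal k μ 0) := by
      refine ⟨?_⟩
      rw [Submodule.fg_def]
      refine ⟨{π 1, π (X 0), π (X 1), π (X 0 ^ 2), π (X 1 ^ 2), π (X 0 ^ 3)},
        by repeat first | exact Set.finite_singleton _ | apply Set.Finite.insert, ?_⟩
      rw [eq_top_iff]
      rintro a -
      obtain ⟨p, rfl⟩ := Ideal.Quotient.mk_surjective a
      obtain ⟨c0, c1, c2, c3, c4, c5, hc⟩ := exists_rep μ 0 p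
      have hsum : π p = c0 • π 1 + c1 • π (X 0) + c2 • π (X 1) + c3 • π (X 0 ^ 2) +
          c4 • π (X 1 ^ 2) + c5 • π (X 0 ^ 3) := by
        simp only [hπ, smul_mk, ← map_add]
        rw [hc]
        congr 1
        simp only [Pc, mul_one]
      rw [hsum]
      refine add_mem (add_mem (add_mem (add_mem (add_mem
        (Submodule.smul_mem _ _ (Submodule.subset_span (Set.mem_insert _ _)))
        (Submodule.smul_mem _ _ (Submodule.subset_span
          (Set.mem_insert_of_mem _ (Set.mem_insert _ _)))))
        (Submodule.smul_mem _ _ (Submodule.subset_span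
          (Set.mem_insert_of_mem _ (Set.mem_insert_of_mem _ (Set.mem_insert _ _))))))
        (Submodule.smul_mem _ _ (Submodule.subset_span
          (Set.mem_insert_of_mem _ (Set.mem_insert_of_mem _ (Set.mem_insert_of_mem _
            (Set.mem_insert _ _)))))))
        (Submodule.smul_mem _ _ (Submodule.subset_span
          (Set.mem_insert_of_mem _ (Set.mem_insert_of_mem _ (Set.mem_insert_of_mem _
            (Set.mem_insert_of_mem _ (Set.mem_insert _ _))))))))
        (Submodule.smul_mem _ _ (Submodule.subset_span
          (Set.mem_insert_of_mem _ (Set.mem_insert_of_mem _ (Set.mem_insert_of_mem _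
            (Set.mem_insert_of_mem _ (Set.mem_insert_of_mem _ rfl)))))))
    -- y² lies in the socle when ν = 0
    have hy2 : π (X 1 ^ 2) ∈ Soc := by
      intro b hb
      obtain ⟨u, w, rfl⟩ := Ideal.mem_span_pair.mp hb
      have e1 : π (X 1 ^ 2) * π (X 0) = 0 := by
        rw [← map_mul, show (X 1 ^ 2 * X 0 : MvPolynomial (Fin 2) k) = X 0 * X 1 ^ 2 by ring]
        exact Ideal.Quotient.eq_zero_iff_mem.mpr (m_xy2 μ 0)
      have e2 : π (X 1 ^ 2) * π (X 1) = 0 := by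
        rw [← map_mul, ← pow_succ]
        have := m_g2 (k := k) μ 0
        rw [map_zero, zero_mul, sub_zero] at this
        exact Ideal.Quotient.eq_zero_iff_mem.mpr this
      calc π (X 1 ^ 2) * (u * π (X 0) + w * π (X 1))
          = u * (π (X 1 ^ 2) * π (X 0)) + w * (π (X 1 ^ 2) * π (X 1)) := by ring
        _ = 0 := by rw [e1, e2]; ring
    -- linear independence of x³, y²
    have li : LinearIndependent k ![π (X 0 ^ 3), π (X 1 ^ 2)] := by
      rw [LinearIndependent.pair_iff]
      intro s t hst
      rw [hπ, smul_mk, smul_mk, ← map_add] at hst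
      have hmem : (C s * X 0 ^ 3 + C t * X 1 ^ 2 : MvPolynomial (Fin 2) k) ∈ muNuIdeal k μ 0 :=
        Ideal.Quotient.eq_zero_iff_mem.mp hst
      have hmem' : (C s * (X 0 ^ 3 * X 1 ^ 0) + C t * (X 0 ^ 0 * X 1 ^ 2) :
          MvPolynomial (Fin 2) k) ∈ muNuIdeal k μ 0 := by
        rw [show (C s * (X 0 ^ 3 * X 1 ^ 0) + C t * (X 0 ^ 0 * X 1 ^ 2) :
          MvPolynomial (Fin 2) k) = C s * X 0 ^ 3 + C t * X 1 ^ 2 by ring]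
        exact hmem
      obtain ⟨-, -, -, -, h5, h6⟩ := coeffs_of_mem μ 0 hmem'
      simp only [coeff_add, coeff_C_mul_mono] at h5 h6
      norm_num at h5 h6
      exact ⟨h6, h5⟩
    have hle : Submodule.span k (Set.range ![π (X 0 ^ 3), π (X 1 ^ 2)]) ≤
        Soc.restrictScalars k := by
      rw [Submodule.span_le]
      rintro x ⟨i, rfl⟩
      fin_cases i
      · simpa using x3_mem_socle μ 0
      · simpa using hy2
    have hmono := Submodule.finrank_mono hle
    rw [finrank_span_eq_card li, h1] at hmono
    simp at hmono
  · -- ν ≠ 0 → finrank = 1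
    intro hν
    have hEq : Soc.restrictScalars k = Submodule.span k {π (X 0 ^ 3)} := by
      apply le_antisymm
      · intro a ha
        have ha' : a ∈ Soc := ha
        obtain ⟨p, rfl⟩ := Ideal.Quotient.mk_surjective a
        obtain ⟨c0, c1, c2, c3, c4, c5, hc⟩ := exists_rep μ ν p
        have hax : π p * π (X 0) = 0 :=
          ha' (π (X 0)) (Ideal.subset_span (Set.mem_insert _ _))
        have hay : π p * π (X 1) = 0 :=
          ha' (π (X 1)) (Ideal.subset_span (Set.mem_insert_of_mem _ rfl))
        rw [hc, ← map_mul] at hax hay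
        have hmx := coeffs_of_mem μ ν (Ideal.Quotient.eq_zero_iff_mem.mp hax)
        have hmy := coeffs_of_mem μ ν (Ideal.Quotient.eq_zero_iff_mem.mp hay)
        obtain ⟨-, h10, -, h20, -, hL3⟩ := hmx
        obtain ⟨-, -, -, -, h02, hL3'⟩ := hmy
        obtain ⟨e0, e1, e2, e3, e4⟩ := coeffs_PcX0 c0 c1 c2 c3 c4 c5
        obtain ⟨f0, f1, f2, f3, f4⟩ := coeffs_PcX1 c0 c1 c2 c3 c4 c5
        rw [e0] at h10
        rw [e1] at h20
        rw [e3, e2, e4] at hL3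
        rw [f1] at h02
        rw [f2, f3, f4] at hL3'
        -- h10 : c0 = 0, h20 : c1 = 0, h02 : c2 = 0
        -- hL3 : c3 + μ * c2 + ν * 0 = 0, hL3' : 0 + μ * c1 + ν * c4 = 0
        have hc3 : c3 = 0 := by rw [h02] at hL3; linear_combination hL3
        have hc4 : c4 = 0 := by
          have hνc4 : ν * c4 = 0 := by rw [h20] at hL3'; linear_combination hL3'
          exact (mul_eq_zero.mp hνc4).resolve_left hν
        subst h10 h20 h02 hc3 hc4
        rw [hc]
        refine Submodule.mem_span_singleton.mpr ⟨c5, ?_⟩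
        rw [hπ, smul_mk]
        congr 1
        simp [Pc]
      · rw [Submodule.span_le, Set.singleton_subset_iff]
        exact x3_mem_socle μ ν
    rw [hEq]
    exact finrank_span_singleton (x3_ne_zero μ ν)
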